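/- For all integers r, s, k and every formal power series p(z1, z2) ∈ ℂ[[z1, z2]], the following identity of formal series in z0, z1, z2 (with integer exponents) holds: z0^{-1}δ((z1−z2)/z0)·z1^{r} z2^{s} (z1−z2)^{k} p(z1,z2) − z0^{-1}δ((z2−z1)/(−z0))·z1^{r} z2^{s} (−z2+z1)^{k} p(z1,z2) = z2^{-1}δ((z1−z0)/z2)·(z2+z0)^{r} z2^{s} z0^{k} p(z2+z0, z2). Here (z1−z2)^{k} and the expansion of δ((z1−z2)/z0) are taken in nonnegative integer powers of z2; (−z2+z1)^{k} and the expansion of δ((z2−z1)/(−z0)) are taken in nonnegative integer powers of z1; and (z2+z0)^{r}, p(z2+z0, z2) and the expansion of δ((z1−z0)/z2) are taken in nonnegative integer powers of z0. All three terms are well-defined formal series (each coefficient is a finite sum). -/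

import Mathlib

/-- The generalized binomial coefficient `binom(γ, i) = γ(γ−1)⋯(γ−i+1)/i!` for `γ : ℂ`, `i : ℕ`. -/
noncomputable def cchoose (γ : ℂ) (i : ℕ) : ℂ :=
  (∏ j ∈ Finset.range i, (γ - (j : ℂ))) / (i.factorial : ℂ)

/-- Summand family for the coefficient of `z0^m0 z1^m1 z2^m2` in
`z0⁻¹ δ((z1−z2)/z0) · z1^r z2^s (z1−z2)^k p(z1,z2)`, where `δ((z1−z2)/z0)` and `(z1−z2)^k`
are expanded in nonnegative integer powers of `z2`.  The index `(i, j, b)` records the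
power of `z2` taken from the delta function, from `(z1−z2)^k` and from `p` respectively;
`n = −m0−1` is forced by the `z0`-exponent and the `z1`-exponent `a` of the term of `p`
is determined by `m1`. -/
noncomputable def termAfun (r s k : ℤ) (p : ℕ → ℕ → ℂ) (m0 m1 m2 : ℤ) :
    ℕ × ℕ × ℕ → ℂ := fun x =>
  let i := x.1; let j := x.2.1; let b := x.2.2
  let n : ℤ := -m0 - 1
  let a : ℤ := m1 - (n - i + r + k - j)
  if ((i : ℤ) + j + b = m2 - s ∧ 0 ≤ a) then
    cchoose (n : ℂ) i * (-1) ^ i * cchoose (k : ℂ) j * (-1) ^ j * p a.toNat b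
  else 0

/-- Coefficient of `z0^m0 z1^m1 z2^m2` in
`z0⁻¹ δ((z1−z2)/z0) · z1^r z2^s (z1−z2)^k p(z1,z2)`. -/
noncomputable def termA (r s k : ℤ) (p : ℕ → ℕ → ℂ) (m0 m1 m2 : ℤ) : ℂ :=
  ∑' x : ℕ × ℕ × ℕ, termAfun r s k p m0 m1 m2 x

/-- Summand family for the coefficient of `z0^m0 z1^m1 z2^m2` in
`z0⁻¹ δ((z2−z1)/(−z0)) · z1^r z2^s (−z2+z1)^k p(z1,z2)`, where `δ((z2−z1)/(−z0))` and
`(−z2+z1)^k` are expanded in nonnegative integer powers of `z1`.  The index `(i, j, a)`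
records the power of `z1` taken from the delta function, from `(−z2+z1)^k` and from `p`
respectively; `n = −m0−1` is forced by the `z0`-exponent and the `z2`-exponent `b` of the
term of `p` is determined by `m2`. -/
noncomputable def termBfun (r s k : ℤ) (p : ℕ → ℕ → ℂ) (m0 m1 m2 : ℤ) :
    ℕ × ℕ × ℕ → ℂ := fun x =>
  let i := x.1; let j := x.2.1; let a := x.2.2
  let n : ℤ := -m0 - 1
  let b : ℤ := m2 - (n - i + s + k - j)
  if ((i : ℤ) + j + a = m1 - r ∧ 0 ≤ b) then
    (-1 : ℂ) ^ n * cchoose (n : ℂ) i * (-1) ^ i * cchoose (k : ℂ) j * (-1 : ℂ) ^ (k - j)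
      * p a b.toNat
  else 0

/-- Coefficient of `z0^m0 z1^m1 z2^m2` in
`z0⁻¹ δ((z2−z1)/(−z0)) · z1^r z2^s (−z2+z1)^k p(z1,z2)`. -/
noncomputable def termB (r s k : ℤ) (p : ℕ → ℕ → ℂ) (m0 m1 m2 : ℤ) : ℂ :=
  ∑' x : ℕ × ℕ × ℕ, termBfun r s k p m0 m1 m2 x

/-- Summand family for the coefficient of `z0^m0 z1^m1 z2^m2` in
`z2⁻¹ δ((z1−z0)/z2) · (z2+z0)^r z2^s z0^k p(z2+z0, z2)`, where `δ((z1−z0)/z2)`,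
`(z2+z0)^r` and `p(z2+z0,z2)` are expanded in nonnegative integer powers of `z0`.
The index `(i, j, c, b)` records the power of `z0` taken from the delta function,
from `(z2+z0)^r` and from the expansion of `(z2+z0)^a` inside `p(z2+z0,z2)` (whose term
`p(a,b) (z2+z0)^a z2^b` contributes `binom(a,c) z2^{a-c} z0^c z2^b`); `n = m1 + i` is
forced by the `z1`-exponent and `a` is determined by the `z2`-exponent `m2`. -/
noncomputable def termCfun (r s k : ℤ) (p : ℕ → ℕ → ℂ) (m0 m1 m2 : ℤ) :
    ℕ × ℕ × ℕ × ℕ → ℂ := fun x =>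
  let i := x.1; let j := x.2.1; let c := x.2.2.1; let b := x.2.2.2
  let n : ℤ := m1 + i
  let a : ℤ := m2 - (-1 - n + r - j + s - c + b)
  if ((i : ℤ) + j + c = m0 - k ∧ 0 ≤ a ∧ (c : ℤ) ≤ a) then
    cchoose (n : ℂ) i * (-1) ^ i * cchoose (r : ℂ) j * (a.toNat.choose c : ℂ) * p a.toNat b
  else 0

/-- Coefficient of `z0^m0 z1^m1 z2^m2` in
`z2⁻¹ δ((z1−z0)/z2) · (z2+z0)^r z2^s z0^k p(z2+z0, z2)`. -/
noncomputable def termC (r s k : ℤ) (p : ℕ → ℕ → ℂ) (m0 m1 m2 : ℤ) : ℂ :=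
  ∑' x : ℕ × ℕ × ℕ × ℕ, termCfun r s k p m0 m1 m2 x

lemma smeval_descPochhammer_complex (x : ℂ) (n : ℕ) :
    (descPochhammer ℤ n).smeval x = ∏ j ∈ Finset.range n, (x - (j : ℂ)) := by
  induction n with
  | zero => simp [descPochhammer_zero, Polynomial.smeval_one]
  | succ n ih =>
      rw [descPochhammer_succ_right, Polynomial.smeval_mul, ih, Finset.prod_range_succ]
      congr 1
      rw [Polynomial.smeval_sub, Polynomial.smeval_X, Polynomial.smeval_natCast]
      simp

lemma cchoose_eq_ringChoose (x : ℂ) (i : ℕ) : cchoose x i = Ring.choose x i := by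
  have h := Ring.descPochhammer_eq_factorial_smul_choose x i
  rw [smeval_descPochhammer_complex] at h
  rw [cchoose, h, nsmul_eq_mul]
  field_simp [Nat.factorial_ne_zero]

lemma cchoose_natCast (t i : ℕ) : cchoose (t : ℂ) i = (t.choose i : ℂ) := by
  rw [cchoose_eq_ringChoose, Ring.choose_natCast]

lemma cchoose_vandermonde (x y : ℂ) (W : ℕ) :
    ∑ i ∈ Finset.range (W + 1), cchoose x i * cchoose y (W - i) = cchoose (x + y) W := by
  simp only [cchoose_eq_ringChoose]
  rw [Ring.add_choose_eq W (Commute.all x y), Finset.Nat.sum_antidiagonal_eq_sum_range_succ_mk]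

lemma cchoose_reflect (x : ℂ) (i : ℕ) :
    (-1 : ℂ) ^ i * cchoose x i = cchoose ((i : ℂ) - 1 - x) i := by
  rw [cchoose, cchoose, mul_div_assoc']
  congr 1
  have key : ∀ j ∈ Finset.range i, (i : ℂ) - 1 - x - ((i - 1 - j : ℕ) : ℂ)
      = (-1) * (x - (j : ℂ)) := by
    intro j hj
    rw [Finset.mem_range] at hj
    have h1 : ((i - 1 - j : ℕ) : ℂ) = (i : ℂ) - 1 - j := by
      have : i - 1 - j = i - (1 + j) := by omega
      rw [this, Nat.cast_sub (by omega)]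
      push_cast; ring
    rw [h1]; ring
  calc (-1:ℂ)^i * ∏ j ∈ Finset.range i, (x - (j:ℂ))
      = ∏ j ∈ Finset.range i, ((-1) * (x - (j:ℂ))) := by
        rw [Finset.prod_mul_distrib, Finset.prod_const, Finset.card_range]
    _ = ∏ j ∈ Finset.range i, ((i : ℂ) - 1 - x - ((i - 1 - j : ℕ) : ℂ)) :=
        (Finset.prod_congr rfl key).symm
    _ = ∏ j ∈ Finset.range i, ((i : ℂ) - 1 - x - (j : ℂ)) :=
        Finset.prod_range_reflect (fun j => (i : ℂ) - 1 - x - (j : ℂ)) i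

lemma cchoose_nat_zero (t N : ℕ) (h : t < N) : cchoose (t : ℂ) N = 0 := by
  rw [cchoose_natCast, Nat.choose_eq_zero_of_lt h, Nat.cast_zero]

lemma neg_one_pow_congr_nat {m n : ℕ} (h : m % 2 = n % 2) : (-1 : ℂ) ^ m = (-1) ^ n := by
  rcases Nat.even_or_odd m with he | ho
  · have hm := Nat.even_iff.mp he
    rw [he.neg_one_pow, (Nat.even_iff.mpr (by omega)).neg_one_pow]
  · have hm := Nat.odd_iff.mp ho
    rw [ho.neg_one_pow, (Nat.odd_iff.mpr (by omega)).neg_one_pow]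

lemma neg_one_zpow_natAbs (e : ℤ) : (-1 : ℂ) ^ e = (-1 : ℂ) ^ e.natAbs := by
  rcases Int.even_or_odd e with he | ho
  · have h1 := Int.even_iff.mp he
    rw [he.neg_one_zpow, (Nat.even_iff.mpr (by omega)).neg_one_pow]
  · have h1 := Int.odd_iff.mp ho
    rw [Odd.neg_one_zpow ho, (Nat.odd_iff.mpr (by omega)).neg_one_pow]

lemma toNat_cast {a : ℤ} (h : 0 ≤ a) : ((a.toNat : ℕ) : ℂ) = ((a : ℤ) : ℂ) := by
  have h2 : ((a.toNat : ℕ) : ℤ) = a := Int.toNat_of_nonneg h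
  exact_mod_cast congrArg (Int.cast : ℤ → ℂ) h2

lemma choose_symm' {m n t : ℕ} (h : m + n = t) : t.choose m = t.choose n := by
  subst h
  have := Nat.choose_symm (show m ≤ m + n by omega)
  rw [← this]
  congr 1
  omega

lemma sum_ite_le {u M : ℕ} (h : M < u) (g : ℕ → ℂ) :
    ∑ i ∈ Finset.range u, (if i ≤ M then g i else 0) = ∑ i ∈ Finset.range (M + 1), g i := by
  have h1 : ∑ i ∈ Finset.range (M + 1), (if i ≤ M then g i else 0)
      = ∑ i ∈ Finset.range u, (if i ≤ M then g i else 0) :=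
    Finset.sum_subset (Finset.range_subset_range.mpr h)
      (fun x _ hx => if_neg (by rw [Finset.mem_range] at hx; omega))
  rw [← h1]
  exact Finset.sum_congr rfl fun i hi => if_pos (by rw [Finset.mem_range] at hi; omega)

lemma sum_ite_diag {u M : ℕ} (h : M < u) (g : ℕ → ℕ → ℂ) :
    ∑ i ∈ Finset.range u, ∑ j ∈ Finset.range u, (if i + j = M then g i j else 0)
      = ∑ i ∈ Finset.range (M + 1), g i (M - i) := by
  have step : ∀ i, ∑ j ∈ Finset.range u, (if i + j = M then g i j else 0)
      = if i ≤ M then g i (M - i) else 0 := by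
    intro i
    by_cases hi : i ≤ M
    · rw [if_pos hi]
      have hpt : ∀ j ∈ Finset.range u, (if i + j = M then g i j else 0)
          = (if j = M - i then g i (M - i) else 0) := by
        intro j _
        by_cases h1 : i + j = M
        · rw [if_pos h1, if_pos (by omega)]
          congr 1
          omega
        · rw [if_neg h1, if_neg (by omega)]
      rw [Finset.sum_congr rfl hpt,
        Finset.sum_ite_eq' (Finset.range u) (M - i) (fun _ => g i (M - i))]
      exact if_pos (Finset.mem_range.mpr (by omega))
    · rw [if_neg hi]
      exact Finset.sum_eq_zero fun j _ => if_neg (by omega)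
  rw [Finset.sum_congr rfl fun i _ => step i]
  exact sum_ite_le h _

lemma sum_range_ext {F : ℕ → ℂ} {u W : ℕ} (h : u ≤ W) (h0 : ∀ b, u ≤ b → F b = 0) :
    ∑ b ∈ Finset.range W, F b = ∑ b ∈ Finset.range u, F b :=
  (Finset.sum_subset (Finset.range_subset_range.mpr h)
    (fun x _ hx => h0 x (by rw [Finset.mem_range] at hx; omega))).symm

lemma termAfun_eq (r s k : ℤ) (p : ℕ → ℕ → ℂ) (m0 m1 m2 : ℤ) (i j b : ℕ) :
    termAfun r s k p m0 m1 m2 (i, j, b) =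
      if ((i : ℤ) + j + b = m2 - s ∧ 0 ≤ m1 - (-m0 - 1 - i + r + k - j)) then
        cchoose ((-m0 - 1 : ℤ) : ℂ) i * (-1) ^ i * cchoose ((k : ℤ) : ℂ) j * (-1) ^ j
          * p (m1 - (-m0 - 1 - i + r + k - j)).toNat b
      else 0 := rfl

noncomputable def FA (r s k : ℤ) (p : ℕ → ℕ → ℂ) (m0 m1 m2 : ℤ) (b : ℕ) : ℂ :=
  if ((b : ℤ) ≤ m0 + m1 + m2 + 1 - r - s - k ∧ (b : ℤ) ≤ m2 - s) then
    (-1 : ℂ) ^ (m2 - s - b).toNat * cchoose ((k - m0 - 1 : ℤ) : ℂ) (m2 - s - b).toNat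
      * p (m0 + m1 + m2 + 1 - r - s - k - b).toNat b
  else 0

lemma suppA (r s k : ℤ) (p : ℕ → ℕ → ℂ) (m0 m1 m2 : ℤ) :
    ∀ x ∉ (Finset.range ((m2 - s).toNat + 1) ×ˢ Finset.range ((m2 - s).toNat + 1)
        ×ˢ Finset.range ((m2 - s).toNat + 1)),
      termAfun r s k p m0 m1 m2 x = 0 := by
  rintro ⟨i, j, b⟩ hx
  rw [termAfun_eq]
  refine if_neg fun hc => hx ?_
  obtain ⟨h1, _⟩ := hc
  simp only [Finset.mem_product, Finset.mem_range]
  omega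

lemma lemA (r s k : ℤ) (p : ℕ → ℕ → ℂ) (m0 m1 m2 : ℤ) :
    termA r s k p m0 m1 m2
      = ∑ b ∈ Finset.range ((m2 - s).toNat + 1), FA r s k p m0 m1 m2 b := by
  classical
  rw [termA, tsum_eq_sum (suppA r s k p m0 m1 m2), Finset.sum_product]
  simp only [Finset.sum_product]
  rw [Finset.sum_congr rfl fun i (_ : i ∈ _) => Finset.sum_comm, Finset.sum_comm]
  refine Finset.sum_congr rfl fun b hb => ?_
  rw [Finset.mem_range] at hb
  by_cases hb1 : (b : ℤ) ≤ m2 - s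
  · by_cases hb2 : (b : ℤ) ≤ m0 + m1 + m2 + 1 - r - s - k
    · -- main case
      have hpt : ∀ i ∈ Finset.range ((m2 - s).toNat + 1),
          ∀ j ∈ Finset.range ((m2 - s).toNat + 1),
          termAfun r s k p m0 m1 m2 (i, j, b)
            = if i + j = (m2 - s - b).toNat then
                cchoose ((-m0 - 1 : ℤ) : ℂ) i * (-1) ^ i * cchoose ((k : ℤ) : ℂ) j * (-1) ^ j
                  * p (m0 + m1 + m2 + 1 - r - s - k - b).toNat b
              else 0 := by
        intro i _ j _
        rw [termAfun_eq]
        by_cases hc : (i : ℤ) + j + b = m2 - s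
        · rw [if_pos ⟨hc, by omega⟩, if_pos (by omega)]
          congr 2
          omega
        · rw [if_neg (fun hcc => hc hcc.1), if_neg (by omega)]
      rw [Finset.sum_congr rfl fun i hi => Finset.sum_congr rfl fun j hj => hpt i hi j hj,
        sum_ite_diag (by omega)]
      rw [FA, if_pos ⟨hb2, hb1⟩]
      have hstep : ∀ i ∈ Finset.range ((m2 - s - b).toNat + 1),
          cchoose ((-m0 - 1 : ℤ) : ℂ) i * (-1) ^ i * cchoose ((k : ℤ) : ℂ) ((m2 - s - b).toNat - i)
              * (-1) ^ ((m2 - s - b).toNat - i)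
              * p (m0 + m1 + m2 + 1 - r - s - k - b).toNat b
            = (-1 : ℂ) ^ (m2 - s - b).toNat
              * (cchoose ((-m0 - 1 : ℤ) : ℂ) i * cchoose ((k : ℤ) : ℂ) ((m2 - s - b).toNat - i))
              * p (m0 + m1 + m2 + 1 - r - s - k - b).toNat b := by
        intro i hi
        rw [Finset.mem_range] at hi
        have h3 : (-1 : ℂ) ^ i * (-1 : ℂ) ^ ((m2 - s - b).toNat - i)
            = (-1 : ℂ) ^ (m2 - s - b).toNat := by
          rw [← pow_add]; congr 1; omega
        linear_combination (cchoose ((-m0 - 1 : ℤ) : ℂ) i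
          * cchoose ((k : ℤ) : ℂ) ((m2 - s - b).toNat - i)
          * p (m0 + m1 + m2 + 1 - r - s - k - b).toNat b) * h3
      rw [Finset.sum_congr rfl hstep, ← Finset.sum_mul, ← Finset.mul_sum, cchoose_vandermonde]
      congr 2
      push_cast
      ring
    · rw [FA, if_neg (fun hcc => hb2 hcc.1)]
      refine Finset.sum_eq_zero fun i _ => Finset.sum_eq_zero fun j _ => ?_
      rw [termAfun_eq]
      refine if_neg fun hcc => ?_
      obtain ⟨h1, h2⟩ := hcc
      omega
  · rw [FA, if_neg (fun hcc => hb1 hcc.2)]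
    refine Finset.sum_eq_zero fun i _ => Finset.sum_eq_zero fun j _ => ?_
    rw [termAfun_eq]
    refine if_neg fun hcc => ?_
    obtain ⟨h1, h2⟩ := hcc
    omega

lemma termBfun_eq (r s k : ℤ) (p : ℕ → ℕ → ℂ) (m0 m1 m2 : ℤ) (i j a : ℕ) :
    termBfun r s k p m0 m1 m2 (i, j, a) =
      if ((i : ℤ) + j + a = m1 - r ∧ 0 ≤ m2 - (-m0 - 1 - i + s + k - j)) then
        (-1 : ℂ) ^ (-m0 - 1 : ℤ) * cchoose ((-m0 - 1 : ℤ) : ℂ) i * (-1) ^ i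
          * cchoose ((k : ℤ) : ℂ) j * (-1 : ℂ) ^ (k - (j : ℤ))
          * p a (m2 - (-m0 - 1 - i + s + k - j)).toNat
      else 0 := rfl

noncomputable def FB (r s k : ℤ) (p : ℕ → ℕ → ℂ) (m0 m1 m2 : ℤ) (a : ℕ) : ℂ :=
  if ((a : ℤ) ≤ m0 + m1 + m2 + 1 - r - s - k ∧ (a : ℤ) ≤ m1 - r) then
    (-1 : ℂ) ^ ((k - m0 - 1 : ℤ).natAbs) * (-1 : ℂ) ^ (m1 - r - a).toNat
      * cchoose ((k - m0 - 1 : ℤ) : ℂ) (m1 - r - a).toNat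
      * p a (m0 + m1 + m2 + 1 - r - s - k - a).toNat
  else 0

lemma suppB (r s k : ℤ) (p : ℕ → ℕ → ℂ) (m0 m1 m2 : ℤ) :
    ∀ x ∉ (Finset.range ((m1 - r).toNat + 1) ×ˢ Finset.range ((m1 - r).toNat + 1)
        ×ˢ Finset.range ((m1 - r).toNat + 1)),
      termBfun r s k p m0 m1 m2 x = 0 := by
  rintro ⟨i, j, a⟩ hx
  rw [termBfun_eq]
  refine if_neg fun hc => hx ?_
  obtain ⟨h1, _⟩ := hc
  simp only [Finset.mem_product, Finset.mem_range]
  omega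

lemma lemB (r s k : ℤ) (p : ℕ → ℕ → ℂ) (m0 m1 m2 : ℤ) :
    termB r s k p m0 m1 m2
      = ∑ a ∈ Finset.range ((m1 - r).toNat + 1), FB r s k p m0 m1 m2 a := by
  classical
  rw [termB, tsum_eq_sum (suppB r s k p m0 m1 m2), Finset.sum_product]
  simp only [Finset.sum_product]
  rw [Finset.sum_congr rfl fun i (_ : i ∈ _) => Finset.sum_comm, Finset.sum_comm]
  refine Finset.sum_congr rfl fun a ha => ?_
  rw [Finset.mem_range] at ha
  by_cases hb1 : (a : ℤ) ≤ m1 - r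
  · by_cases hb2 : (a : ℤ) ≤ m0 + m1 + m2 + 1 - r - s - k
    · have hpt : ∀ i ∈ Finset.range ((m1 - r).toNat + 1),
          ∀ j ∈ Finset.range ((m1 - r).toNat + 1),
          termBfun r s k p m0 m1 m2 (i, j, a)
            = if i + j = (m1 - r - a).toNat then
                (-1 : ℂ) ^ (-m0 - 1 : ℤ) * cchoose ((-m0 - 1 : ℤ) : ℂ) i * (-1) ^ i
                  * cchoose ((k : ℤ) : ℂ) j * (-1 : ℂ) ^ (k - (j : ℤ))
                  * p a (m0 + m1 + m2 + 1 - r - s - k - a).toNat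
              else 0 := by
        intro i _ j _
        rw [termBfun_eq]
        by_cases hc : (i : ℤ) + j + a = m1 - r
        · rw [if_pos ⟨hc, by omega⟩, if_pos (by omega)]
          congr 3
          omega
        · rw [if_neg (fun hcc => hc hcc.1), if_neg (by omega)]
      rw [Finset.sum_congr rfl fun i hi => Finset.sum_congr rfl fun j hj => hpt i hi j hj,
        sum_ite_diag (by omega)]
      rw [FB, if_pos ⟨hb2, hb1⟩]
      have hstep : ∀ i ∈ Finset.range ((m1 - r - a).toNat + 1),
          (-1 : ℂ) ^ (-m0 - 1 : ℤ) * cchoose ((-m0 - 1 : ℤ) : ℂ) i * (-1) ^ i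
              * cchoose ((k : ℤ) : ℂ) ((m1 - r - a).toNat - i)
              * (-1 : ℂ) ^ (k - (((m1 - r - a).toNat - i : ℕ) : ℤ))
              * p a (m0 + m1 + m2 + 1 - r - s - k - a).toNat
            = ((-1 : ℂ) ^ ((k - m0 - 1 : ℤ).natAbs) * (-1 : ℂ) ^ (m1 - r - a).toNat)
              * (cchoose ((-m0 - 1 : ℤ) : ℂ) i
                  * cchoose ((k : ℤ) : ℂ) ((m1 - r - a).toNat - i))
              * p a (m0 + m1 + m2 + 1 - r - s - k - a).toNat := by
        intro i hi
        rw [Finset.mem_range] at hi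
        rw [neg_one_zpow_natAbs, neg_one_zpow_natAbs]
        have h3 : (-1 : ℂ) ^ ((-m0 - 1 : ℤ).natAbs) * (-1 : ℂ) ^ i
              * (-1 : ℂ) ^ ((k - (((m1 - r - a).toNat - i : ℕ) : ℤ)).natAbs)
            = (-1 : ℂ) ^ ((k - m0 - 1 : ℤ).natAbs) * (-1 : ℂ) ^ (m1 - r - a).toNat := by
          rw [← pow_add, ← pow_add, ← pow_add]
          refine neg_one_pow_congr_nat ?_
          omega
        linear_combination (cchoose ((-m0 - 1 : ℤ) : ℂ) i
          * cchoose ((k : ℤ) : ℂ) ((m1 - r - a).toNat - i)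
          * p a (m0 + m1 + m2 + 1 - r - s - k - a).toNat) * h3
      rw [Finset.sum_congr rfl hstep, ← Finset.sum_mul, ← Finset.mul_sum, cchoose_vandermonde,
        show ((-m0 - 1 : ℤ) : ℂ) + ((k : ℤ) : ℂ) = ((k - m0 - 1 : ℤ) : ℂ) by push_cast; ring]
    · rw [FB, if_neg (fun hcc => hb2 hcc.1)]
      refine Finset.sum_eq_zero fun i _ => Finset.sum_eq_zero fun j _ => ?_
      rw [termBfun_eq]
      refine if_neg fun hcc => ?_
      obtain ⟨h1, h2⟩ := hcc
      omega
  · rw [FB, if_neg (fun hcc => hb1 hcc.2)]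
    refine Finset.sum_eq_zero fun i _ => Finset.sum_eq_zero fun j _ => ?_
    rw [termBfun_eq]
    refine if_neg fun hcc => ?_
    obtain ⟨h1, h2⟩ := hcc
    omega

lemma termCfun_eq (r s k : ℤ) (p : ℕ → ℕ → ℂ) (m0 m1 m2 : ℤ) (i j c b : ℕ) :
    termCfun r s k p m0 m1 m2 (i, j, c, b) =
      if ((i : ℤ) + j + c = m0 - k ∧ 0 ≤ m2 - (-1 - (m1 + i) + r - j + s - c + b)
          ∧ (c : ℤ) ≤ m2 - (-1 - (m1 + i) + r - j + s - c + b)) then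
        cchoose ((m1 + i : ℤ) : ℂ) i * (-1) ^ i * cchoose ((r : ℤ) : ℂ) j
          * ((m2 - (-1 - (m1 + i) + r - j + s - c + b)).toNat.choose c : ℂ)
          * p (m2 - (-1 - (m1 + i) + r - j + s - c + b)).toNat b
      else 0 := rfl

noncomputable def FC (r s k : ℤ) (p : ℕ → ℕ → ℂ) (m0 m1 m2 : ℤ) (b : ℕ) : ℂ :=
  if ((b : ℤ) ≤ m0 + m1 + m2 + 1 - r - s - k ∧ 0 ≤ m0 - k) then
    cchoose ((m2 - s - b + (m0 - k) : ℤ) : ℂ) (m0 - k).toNat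
      * p (m0 + m1 + m2 + 1 - r - s - k - b).toNat b
  else 0

lemma suppC (r s k : ℤ) (p : ℕ → ℕ → ℂ) (m0 m1 m2 : ℤ) :
    ∀ x ∉ (Finset.range ((m0 - k).toNat + 1) ×ˢ Finset.range ((m0 - k).toNat + 1)
        ×ˢ Finset.range ((m0 - k).toNat + 1)
        ×ˢ Finset.range ((m0 + m1 + m2 + 1 - r - s - k).toNat + 1)),
      termCfun r s k p m0 m1 m2 x = 0 := by
  rintro ⟨i, j, c, b⟩ hx
  rw [termCfun_eq]
  refine if_neg fun hc => hx ?_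
  obtain ⟨h1, h2, _⟩ := hc
  simp only [Finset.mem_product, Finset.mem_range]
  omega

lemma lemC (r s k : ℤ) (p : ℕ → ℕ → ℂ) (m0 m1 m2 : ℤ) :
    termC r s k p m0 m1 m2
      = ∑ b ∈ Finset.range ((m0 + m1 + m2 + 1 - r - s - k).toNat + 1),
          FC r s k p m0 m1 m2 b := by
  classical
  rw [termC, tsum_eq_sum (suppC r s k p m0 m1 m2), Finset.sum_product]
  simp only [Finset.sum_product]
  rw [Finset.sum_congr rfl fun i (_ : i ∈ _) =>
        Finset.sum_congr rfl fun j (_ : j ∈ _) => Finset.sum_comm,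
      Finset.sum_congr rfl fun i (_ : i ∈ _) => Finset.sum_comm,
      Finset.sum_comm]
  refine Finset.sum_congr rfl fun b hb => ?_
  rw [Finset.mem_range] at hb
  by_cases hN : 0 ≤ m0 - k
  · by_cases hbT : (b : ℤ) ≤ m0 + m1 + m2 + 1 - r - s - k
    · -- main case
      have hpt : ∀ i ∈ Finset.range ((m0 - k).toNat + 1), ∀ j ∈ Finset.range ((m0 - k).toNat + 1),
          ∀ c ∈ Finset.range ((m0 - k).toNat + 1),
          termCfun r s k p m0 m1 m2 (i, j, c, b)
            = if i + j + c = (m0 - k).toNat then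
                cchoose ((m1 + i : ℤ) : ℂ) i * (-1) ^ i * cchoose ((r : ℤ) : ℂ) j
                  * ((m0 + m1 + m2 + 1 - r - s - k - b).toNat.choose c : ℂ)
                  * p (m0 + m1 + m2 + 1 - r - s - k - b).toNat b
              else 0 := by
        intro i _ j _ c _
        by_cases h1 : (i : ℤ) + j + c = m0 - k
        · have ha' : m2 - (-1 - (m1 + (i:ℤ)) + r - (j:ℤ) + s - (c:ℤ) + b)
              = m0 + m1 + m2 + 1 - r - s - k - b := by omega
          by_cases h2 : (c : ℤ) ≤ m0 + m1 + m2 + 1 - r - s - k - b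
          · rw [termCfun_eq, if_pos ⟨h1, by omega, by omega⟩, ha', if_pos (by omega)]
          · rw [termCfun_eq, if_neg (by rintro ⟨g1, g2, g3⟩; omega), if_pos (by omega),
              Nat.choose_eq_zero_of_lt (by omega)]
            simp
        · rw [termCfun_eq, if_neg (fun hcc => h1 hcc.1), if_neg (by omega)]
      rw [Finset.sum_congr rfl fun i hi => Finset.sum_congr rfl fun j hj =>
            Finset.sum_congr rfl fun c hc => hpt i hi j hj c hc]
      have hsplit : ∀ i ∈ Finset.range ((m0 - k).toNat + 1),
          ∑ j ∈ Finset.range ((m0 - k).toNat + 1), ∑ c ∈ Finset.range ((m0 - k).toNat + 1),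
            (if i + j + c = (m0 - k).toNat then
                cchoose ((m1 + i : ℤ) : ℂ) i * (-1) ^ i * cchoose ((r : ℤ) : ℂ) j
                  * ((m0 + m1 + m2 + 1 - r - s - k - b).toNat.choose c : ℂ)
                  * p (m0 + m1 + m2 + 1 - r - s - k - b).toNat b
              else 0)
          = if i ≤ (m0 - k).toNat then
              ∑ j ∈ Finset.range ((m0 - k).toNat - i + 1),
                cchoose ((m1 + i : ℤ) : ℂ) i * (-1) ^ i * cchoose ((r : ℤ) : ℂ) j
                  * ((m0 + m1 + m2 + 1 - r - s - k - b).toNat.choose ((m0 - k).toNat - i - j) : ℂ)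
                  * p (m0 + m1 + m2 + 1 - r - s - k - b).toNat b
            else 0 := by
        intro i _
        by_cases hi : i ≤ (m0 - k).toNat
        · rw [if_pos hi]
          exact (Finset.sum_congr rfl fun j _ => Finset.sum_congr rfl fun c _ => by
              split_ifs with g1 g2 <;> first | rfl | omega).trans
            (sum_ite_diag (show (m0 - k).toNat - i < (m0 - k).toNat + 1 by omega)
              (fun j c => cchoose ((m1 + i : ℤ) : ℂ) i * (-1) ^ i * cchoose ((r : ℤ) : ℂ) j
                * ((m0 + m1 + m2 + 1 - r - s - k - b).toNat.choose c : ℂ)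
                * p (m0 + m1 + m2 + 1 - r - s - k - b).toNat b))
        · rw [if_neg hi]
          refine Finset.sum_eq_zero fun j _ => Finset.sum_eq_zero fun c _ => if_neg (by omega)
      rw [Finset.sum_congr rfl hsplit, sum_ite_le (by omega)]
      have hinner : ∀ i ∈ Finset.range ((m0 - k).toNat + 1),
          ∑ j ∈ Finset.range ((m0 - k).toNat - i + 1),
              cchoose ((m1 + i : ℤ) : ℂ) i * (-1) ^ i * cchoose ((r : ℤ) : ℂ) j
                * ((m0 + m1 + m2 + 1 - r - s - k - b).toNat.choose ((m0 - k).toNat - i - j) : ℂ)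
                * p (m0 + m1 + m2 + 1 - r - s - k - b).toNat b
            = cchoose ((-1 - m1 : ℤ) : ℂ) i
              * cchoose (((r : ℤ) : ℂ) + (((m0 + m1 + m2 + 1 - r - s - k - b).toNat : ℕ) : ℂ))
                  ((m0 - k).toNat - i)
              * p (m0 + m1 + m2 + 1 - r - s - k - b).toNat b := by
        intro i _
        have hpt2 : ∀ j ∈ Finset.range ((m0 - k).toNat - i + 1),
            cchoose ((m1 + i : ℤ) : ℂ) i * (-1) ^ i * cchoose ((r : ℤ) : ℂ) j
                * ((m0 + m1 + m2 + 1 - r - s - k - b).toNat.choose ((m0 - k).toNat - i - j) : ℂ)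
                * p (m0 + m1 + m2 + 1 - r - s - k - b).toNat b
              = (cchoose ((m1 + i : ℤ) : ℂ) i * (-1) ^ i)
                * (cchoose ((r : ℤ) : ℂ) j
                    * cchoose ((((m0 + m1 + m2 + 1 - r - s - k - b).toNat : ℕ) : ℂ))
                        ((m0 - k).toNat - i - j))
                * p (m0 + m1 + m2 + 1 - r - s - k - b).toNat b := by
          intro j _
          rw [cchoose_natCast]
          ring
        rw [Finset.sum_congr rfl hpt2, ← Finset.sum_mul, ← Finset.mul_sum, cchoose_vandermonde,
          mul_comm (cchoose ((m1 + i : ℤ) : ℂ) i) ((-1 : ℂ) ^ i), cchoose_reflect,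
          show ((i : ℕ) : ℂ) - 1 - ((m1 + i : ℤ) : ℂ) = ((-1 - m1 : ℤ) : ℂ) by push_cast; ring]
      rw [Finset.sum_congr rfl hinner, ← Finset.sum_mul, cchoose_vandermonde,
        show ((-1 - m1 : ℤ) : ℂ) + (((r : ℤ) : ℂ)
            + (((m0 + m1 + m2 + 1 - r - s - k - b).toNat : ℕ) : ℂ))
          = ((m2 - s - b + (m0 - k) : ℤ) : ℂ) by
            rw [toNat_cast (show (0:ℤ) ≤ m0 + m1 + m2 + 1 - r - s - k - b by omega)]
            push_cast; ring]
      rw [FC, if_pos ⟨hbT, hN⟩]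
    · rw [FC, if_neg (fun hcc => hbT hcc.1)]
      refine Finset.sum_eq_zero fun i _ => Finset.sum_eq_zero fun j _ =>
        Finset.sum_eq_zero fun c _ => ?_
      rw [termCfun_eq]
      refine if_neg ?_
      rintro ⟨g1, g2, g3⟩
      omega
  · rw [FC, if_neg (fun hcc => hN hcc.2)]
    refine Finset.sum_eq_zero fun i _ => Finset.sum_eq_zero fun j _ =>
      Finset.sum_eq_zero fun c _ => ?_
    rw [termCfun_eq]
    refine if_neg ?_
    rintro ⟨g1, g2, g3⟩
    omega

lemma star_id (M L N : ℤ) (h : M + L = -N - 1) :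
    (if 0 ≤ M then (-1 : ℂ) ^ M.toNat * cchoose ((-N - 1 : ℤ) : ℂ) M.toNat else 0)
      - (if 0 ≤ L then (-1 : ℂ) ^ ((-N - 1 : ℤ).natAbs) * (-1 : ℂ) ^ L.toNat
          * cchoose ((-N - 1 : ℤ) : ℂ) L.toNat else 0)
      = (if 0 ≤ N then cchoose ((M + N : ℤ) : ℂ) N.toNat else 0) := by
  rcases le_or_gt 0 N with hN | hN
  · rcases le_or_gt 0 M with hM | hM
    · rw [if_pos hM, if_neg (by omega), if_pos hN, sub_zero]
      have e1 : ((-N - 1 : ℤ) : ℂ) = (M.toNat : ℂ) - 1 - ((M + N : ℤ) : ℂ) := by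
        rw [toNat_cast hM]; push_cast; ring
      rw [e1, ← cchoose_reflect ((M + N : ℤ) : ℂ) M.toNat, ← mul_assoc, ← pow_add,
        Even.neg_one_pow ⟨M.toNat, rfl⟩, one_mul, ← toNat_cast (by omega : (0:ℤ) ≤ M + N),
        cchoose_natCast, cchoose_natCast]
      exact_mod_cast congrArg (Nat.cast : ℕ → ℂ) (choose_symm' (by omega))
    · rcases le_or_gt 0 L with hL | hL
      · rw [if_neg (by omega), if_pos hL, if_pos hN, zero_sub]
        have e1 : ((-N - 1 : ℤ) : ℂ) = (L.toNat : ℂ) - 1 - ((L + N : ℤ) : ℂ) := by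
          rw [toNat_cast hL]; push_cast; ring
        have e2 : ((M + N : ℤ) : ℂ) = (N.toNat : ℂ) - 1 - ((L + N : ℤ) : ℂ) := by
          rw [toNat_cast hN]
          have hM' : M = -N - 1 - L := by omega
          rw [hM']; push_cast; ring
        rw [e1, ← cchoose_reflect ((L + N : ℤ) : ℂ) L.toNat, e2,
          ← cchoose_reflect ((L + N : ℤ) : ℂ) N.toNat,
          ← toNat_cast (by omega : (0:ℤ) ≤ L + N), cchoose_natCast, cchoose_natCast,
          choose_symm' (show L.toNat + N.toNat = (L+N).toNat by omega)]
        have hsign : (-1 : ℂ) ^ ((-N - 1 : ℤ).natAbs) * (-1 : ℂ) ^ L.toNat * (-1 : ℂ) ^ L.toNat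
            = -(-1 : ℂ) ^ N.toNat := by
          rw [mul_assoc, ← pow_add, ← pow_add,
            neg_one_pow_congr_nat (show ((-N-1:ℤ).natAbs + (L.toNat + L.toNat)) % 2
              = (N.toNat + 1) % 2 by omega), pow_succ]
          ring
        set C := (((L + N).toNat.choose N.toNat : ℕ) : ℂ) with hC
        linear_combination (-C) * hsign
      · rw [if_neg (by omega), if_neg (by omega), if_pos hN, sub_zero,
          ← toNat_cast (by omega : (0:ℤ) ≤ M + N)]
        exact (cchoose_nat_zero (M+N).toNat N.toNat (by omega)).symm
  · rw [if_neg (show ¬ (0:ℤ) ≤ N by omega)]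
    have hP : (0:ℤ) ≤ -N - 1 := by omega
    rcases le_or_gt 0 M with hM | hM
    · rcases le_or_gt 0 L with hL | hL
      · rw [if_pos hM, if_pos hL, ← toNat_cast hP, cchoose_natCast, cchoose_natCast,
          choose_symm' (show M.toNat + L.toNat = (-N-1).toNat by omega), sub_eq_zero]
        have hsign : (-1 : ℂ) ^ M.toNat
            = (-1 : ℂ) ^ ((-N - 1 : ℤ).natAbs) * (-1 : ℂ) ^ L.toNat := by
          rw [← pow_add]
          exact neg_one_pow_congr_nat (by omega)
        rw [hsign]
      · rw [if_pos hM, if_neg (by omega), sub_zero, ← toNat_cast hP,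
          cchoose_nat_zero _ _ (by omega), mul_zero]
    · rcases le_or_gt 0 L with hL | hL
      · rw [if_neg (by omega), if_pos hL, zero_sub, ← toNat_cast hP,
          cchoose_nat_zero _ _ (by omega), mul_zero, neg_zero]
      · rw [if_neg (by omega), if_neg (by omega), sub_zero]

/-- For all integers `r, s, k` and every formal power series
`p(z1,z2) ∈ ℂ[[z1,z2]]` (given by its coefficient function `p : ℕ → ℕ → ℂ`), all three
terms of the fundamental delta-function identity are well-defined formal series (each
coefficient is a finite sum), and, coefficientwise,
`z0⁻¹δ((z1−z2)/z0)·z1^r z2^s (z1−z2)^k p(z1,z2)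
 − z0⁻¹δ((z2−z1)/(−z0))·z1^r z2^s (−z2+z1)^k p(z1,z2)
 = z2⁻¹δ((z1−z0)/z2)·(z2+z0)^r z2^s z0^k p(z2+z0,z2)`. -/
theorem delta_function_identity (r s k : ℤ) (p : ℕ → ℕ → ℂ) (m0 m1 m2 : ℤ) :
    (Function.support (termAfun r s k p m0 m1 m2)).Finite ∧
    (Function.support (termBfun r s k p m0 m1 m2)).Finite ∧
    (Function.support (termCfun r s k p m0 m1 m2)).Finite ∧
    termA r s k p m0 m1 m2 - termB r s k p m0 m1 m2 = termC r s k p m0 m1 m2 := by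

  classical
  refine ⟨?_, ?_, ?_, ?_⟩
  · refine Set.Finite.subset (Finset.finite_toSet (Finset.range ((m2 - s).toNat + 1)
      ×ˢ Finset.range ((m2 - s).toNat + 1) ×ˢ Finset.range ((m2 - s).toNat + 1)))
      fun x hx => ?_
    rw [Function.mem_support] at hx
    by_contra hnot
    exact hx (suppA r s k p m0 m1 m2 x fun hmem => hnot (Finset.mem_coe.mpr hmem))
  · refine Set.Finite.subset (Finset.finite_toSet (Finset.range ((m1 - r).toNat + 1)
      ×ˢ Finset.range ((m1 - r).toNat + 1) ×ˢ Finset.range ((m1 - r).toNat + 1)))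
      fun x hx => ?_
    rw [Function.mem_support] at hx
    by_contra hnot
    exact hx (suppB r s k p m0 m1 m2 x fun hmem => hnot (Finset.mem_coe.mpr hmem))
  · refine Set.Finite.subset (Finset.finite_toSet (Finset.range ((m0 - k).toNat + 1)
      ×ˢ Finset.range ((m0 - k).toNat + 1) ×ˢ Finset.range ((m0 - k).toNat + 1)
      ×ˢ Finset.range ((m0 + m1 + m2 + 1 - r - s - k).toNat + 1)))
      fun x hx => ?_
    rw [Function.mem_support] at hx
    by_contra hnot
    exact hx (suppC r s k p m0 m1 m2 x fun hmem => hnot (Finset.mem_coe.mpr hmem))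
  · rw [lemA, lemB, lemC]
    have vanA : ∀ b, (m2 - s).toNat + 1 ≤ b → FA r s k p m0 m1 m2 b = 0 := by
      intro b hb
      simp only [FA]
      exact if_neg (by rintro ⟨h1, h2⟩; omega)
    have vanA' : ∀ b, (m0 + m1 + m2 + 1 - r - s - k).toNat + 1 ≤ b
        → FA r s k p m0 m1 m2 b = 0 := by
      intro b hb
      simp only [FA]
      exact if_neg (by rintro ⟨h1, h2⟩; omega)
    have vanB : ∀ a, (m1 - r).toNat + 1 ≤ a → FB r s k p m0 m1 m2 a = 0 := by
      intro a ha
      simp only [FB]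
      exact if_neg (by rintro ⟨h1, h2⟩; omega)
    have vanB' : ∀ a, (m0 + m1 + m2 + 1 - r - s - k).toNat + 1 ≤ a
        → FB r s k p m0 m1 m2 a = 0 := by
      intro a ha
      simp only [FB]
      exact if_neg (by rintro ⟨h1, h2⟩; omega)
    set W := (m2 - s).toNat + (m1 - r).toNat + (m0 + m1 + m2 + 1 - r - s - k).toNat + 3 with hW
    have eqA : ∑ b ∈ Finset.range ((m2 - s).toNat + 1), FA r s k p m0 m1 m2 b
        = ∑ b ∈ Finset.range ((m0 + m1 + m2 + 1 - r - s - k).toNat + 1),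
            FA r s k p m0 m1 m2 b :=
      (sum_range_ext (W := W) (by omega) vanA).symm.trans (sum_range_ext (W := W) (by omega) vanA')
    have eqB : ∑ a ∈ Finset.range ((m1 - r).toNat + 1), FB r s k p m0 m1 m2 a
        = ∑ a ∈ Finset.range ((m0 + m1 + m2 + 1 - r - s - k).toNat + 1),
            FB r s k p m0 m1 m2 a :=
      (sum_range_ext (W := W) (by omega) vanB).symm.trans (sum_range_ext (W := W) (by omega) vanB')
    have hrefl : ∑ b ∈ Finset.range ((m0 + m1 + m2 + 1 - r - s - k).toNat + 1),
          FB r s k p m0 m1 m2 ((m0 + m1 + m2 + 1 - r - s - k).toNat - b)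
        = ∑ a ∈ Finset.range ((m0 + m1 + m2 + 1 - r - s - k).toNat + 1),
            FB r s k p m0 m1 m2 a := by
      have h := Finset.sum_range_reflect (FB r s k p m0 m1 m2)
        ((m0 + m1 + m2 + 1 - r - s - k).toNat + 1)
      simpa using h
    rw [eqA, eqB, ← hrefl, ← Finset.sum_sub_distrib]
    refine Finset.sum_congr rfl fun b hb => ?_
    rw [Finset.mem_range] at hb
    by_cases hT0 : 0 ≤ m0 + m1 + m2 + 1 - r - s - k
    · have hbT : (b : ℤ) ≤ m0 + m1 + m2 + 1 - r - s - k := by omega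
      have hstar := star_id (m2 - s - b) (m1 - r - (m0 + m1 + m2 + 1 - r - s - k - b))
        (m0 - k) (by ring)
      have eFA : FA r s k p m0 m1 m2 b
          = (if 0 ≤ m2 - s - b then (-1 : ℂ) ^ (m2 - s - b).toNat
              * cchoose ((-(m0 - k) - 1 : ℤ) : ℂ) (m2 - s - b).toNat else 0)
            * p (m0 + m1 + m2 + 1 - r - s - k - b).toNat b := by
        simp only [FA]
        by_cases h : (b : ℤ) ≤ m2 - s
        · rw [if_pos ⟨hbT, h⟩, if_pos (by omega),
            show (k - m0 - 1 : ℤ) = -(m0 - k) - 1 by ring]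
        · rw [if_neg (fun hc => h hc.2), if_neg (by omega), zero_mul]
      have eFB : FB r s k p m0 m1 m2 ((m0 + m1 + m2 + 1 - r - s - k).toNat - b)
          = (if 0 ≤ m1 - r - (m0 + m1 + m2 + 1 - r - s - k - b) then
              (-1 : ℂ) ^ ((-(m0 - k) - 1 : ℤ).natAbs)
                * (-1 : ℂ) ^ (m1 - r - (m0 + m1 + m2 + 1 - r - s - k - b)).toNat
                * cchoose ((-(m0 - k) - 1 : ℤ) : ℂ)
                    (m1 - r - (m0 + m1 + m2 + 1 - r - s - k - b)).toNat else 0)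
            * p (m0 + m1 + m2 + 1 - r - s - k - b).toNat b := by
        simp only [FB]
        have hcast : (((m0 + m1 + m2 + 1 - r - s - k).toNat - b : ℕ) : ℤ)
            = m0 + m1 + m2 + 1 - r - s - k - b := by omega
        rw [hcast, show (k - m0 - 1 : ℤ) = -(m0 - k) - 1 by ring,
          show ((m0 + m1 + m2 + 1 - r - s - k).toNat - b : ℕ)
            = (m0 + m1 + m2 + 1 - r - s - k - (b : ℤ)).toNat by omega,
          show (m0 + m1 + m2 + 1 - r - s - k - (m0 + m1 + m2 + 1 - r - s - k - (b:ℤ))).toNat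
            = b by omega]
        by_cases h : 0 ≤ m1 - r - (m0 + m1 + m2 + 1 - r - s - k - b)
        · rw [if_pos ⟨by omega, by omega⟩, if_pos h]
        · rw [if_neg (by rintro ⟨g1, g2⟩; omega), if_neg h, zero_mul]
      have eFC : FC r s k p m0 m1 m2 b
          = (if 0 ≤ m0 - k then
              cchoose ((m2 - s - b + (m0 - k) : ℤ) : ℂ) (m0 - k).toNat else 0)
            * p (m0 + m1 + m2 + 1 - r - s - k - b).toNat b := by
        simp only [FC]
        by_cases h : 0 ≤ m0 - k
        · rw [if_pos ⟨hbT, h⟩, if_pos h]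
        · rw [if_neg (fun hc => h hc.2), if_neg h, zero_mul]
      rw [eFA, eFB, eFC, ← sub_mul, hstar]
    · simp only [FA, FB, FC]
      rw [if_neg (by rintro ⟨h1, h2⟩; omega), if_neg (by rintro ⟨h1, h2⟩; omega),
        if_neg (by rintro ⟨h1, h2⟩; omega)]
      simp
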